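/- Let S be a finite index set with n = |S| ≥ 1, let Q and Q′ be substochastic S×S real matrices, let f, f′ : S → ℝ be vectors with nonnegative entries, and let α ∈ [0,1]. Assume: (i) |Q′(s,t) − Q(s,t)| ≤ α for all s,t ∈ S; (ii) f′(s) ≤ f(s) + α for all s ∈ S; (iii) the matrices I−Q and I−Q′ are invertible and (I−Q′)⁻¹ has nonnegative entries; and (iv) α·‖(I−Q)⁻¹‖·n ≤ 1/2. Set S₀ = ‖(I−Q)⁻¹‖ and C = ‖(I−Q)⁻¹ · f‖_∞. Then for every s ∈ S, the s-component of (I−Q′)⁻¹ · f′ is at most the s-component of (I−Q)⁻¹ · f plus 2·α·S₀·(1 + C·n). -/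

import Mathlib

attribute [local instance] Matrix.linftyOpNormedRing

open Finset

private lemma row_sum_le_norm' {S : Type*} [Fintype S] [DecidableEq S] (M : Matrix S S ℝ) (i : S) :
    ∑ j, ‖M i j‖ ≤ ‖M‖ := by
  rw [Matrix.linfty_opNorm_def]
  have h : (∑ j, ‖M i j‖₊ : NNReal) ≤ Finset.univ.sup fun i => ∑ j, ‖M i j‖₊ :=
    Finset.le_sup (f := fun i => ∑ j, ‖M i j‖₊) (Finset.mem_univ i)
  have h2 := NNReal.coe_le_coe.mpr h
  push_cast at h2
  exact h2

private lemma norm_le_of_rows' {S : Type*} [Fintype S] [DecidableEq S] (M : Matrix S S ℝ) (c : ℝ)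
    (hc : 0 ≤ c) (h : ∀ i, ∑ j, ‖M i j‖ ≤ c) : ‖M‖ ≤ c := by
  rw [Matrix.linfty_opNorm_def, ← Real.coe_toNNReal c hc]
  have : (Finset.univ.sup fun i => ∑ j, ‖M i j‖₊) ≤ c.toNNReal := by
    apply Finset.sup_le
    intro i _
    rw [← NNReal.coe_le_coe, Real.coe_toNNReal c hc]
    push_cast
    exact h i
  exact_mod_cast this

/-- Perturbation lemma in matrix form: if the substochastic matrix `Q'` and the
nonnegative cost vector `f'` are `α`-close to `Q` and `f`, then the expected total
accumulated cost `(I - Q')⁻¹ ⬝ f'` exceeds `(I - Q)⁻¹ ⬝ f` by at most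
`2·α·S₀·(1 + C·n)`, where `S₀ = ‖(I - Q)⁻¹‖` and `C = ‖(I - Q)⁻¹ ⬝ f‖_∞`. -/
theorem perturbation_cost_bound {S : Type*} [Fintype S] [DecidableEq S]
    (hn : 1 ≤ Fintype.card S)
    (Q Q' : Matrix S S ℝ) (f f' : S → ℝ) (α : ℝ)
    (hQ0 : ∀ s t, 0 ≤ Q s t) (hQ1 : ∀ s, ∑ t, Q s t ≤ 1)
    (hQ'0 : ∀ s t, 0 ≤ Q' s t) (hQ'1 : ∀ s, ∑ t, Q' s t ≤ 1)
    (hf : ∀ s, 0 ≤ f s) (hf' : ∀ s, 0 ≤ f' s)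
    (hα : α ∈ Set.Icc (0 : ℝ) 1)
    (hdiff : ∀ s t, |Q' s t - Q s t| ≤ α)
    (hfdiff : ∀ s, f' s ≤ f s + α)
    (hinv : IsUnit (1 - Q)) (hinv' : IsUnit (1 - Q'))
    (hpos : ∀ s t, 0 ≤ (1 - Q')⁻¹ s t)
    (hsmall : α * ‖(1 - Q)⁻¹‖ * (Fintype.card S : ℝ) ≤ 1 / 2) :
    ∀ s, (1 - Q')⁻¹.mulVec f' s ≤
      (1 - Q)⁻¹.mulVec f s +
        2 * α * ‖(1 - Q)⁻¹‖ * (1 + ‖(1 - Q)⁻¹.mulVec f‖ * (Fintype.card S : ℝ)) := by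
  obtain ⟨hα0, hα1⟩ := hα
  set n : ℝ := (Fintype.card S : ℝ) with hn_def
  have hn1 : (1 : ℝ) ≤ n := by rw [hn_def]; exact_mod_cast hn
  have hdet : IsUnit (1 - Q).det := (Matrix.isUnit_iff_isUnit_det _).mp hinv
  have hdet' : IsUnit (1 - Q').det := (Matrix.isUnit_iff_isUnit_det _).mp hinv'
  have hA1 : (1 - Q) * (1 - Q)⁻¹ = 1 := Matrix.mul_nonsing_inv _ hdet
  have hB2 : (1 - Q')⁻¹ * (1 - Q') = 1 := Matrix.nonsing_inv_mul _ hdet'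
  -- resolvent identity
  have hid : (1 - Q')⁻¹ - (1 - Q)⁻¹ = (1 - Q')⁻¹ * (Q' - Q) * (1 - Q)⁻¹ := by
    have e : Q' - Q = (1 - Q) - (1 - Q') := by abel
    rw [e, mul_sub, hB2, sub_mul, one_mul, mul_assoc, hA1, mul_one]
  -- norm of the perturbation
  have hE : ‖Q' - Q‖ ≤ α * n := by
    apply norm_le_of_rows' _ _ (by positivity)
    intro i
    calc ∑ j, ‖(Q' - Q) i j‖ ≤ ∑ _j : S, α := by
          apply Finset.sum_le_sum
          intro j _
          simpa [Matrix.sub_apply, Real.norm_eq_abs] using hdiff i j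
      _ = α * n := by simp [mul_comm]; exact Or.inl hn_def.symm
  have hS0 : (0 : ℝ) ≤ ‖(1 - Q)⁻¹‖ := norm_nonneg _
  have hBn0 : (0 : ℝ) ≤ ‖(1 - Q')⁻¹‖ := norm_nonneg _
  have hC0 : (0 : ℝ) ≤ ‖(1 - Q)⁻¹.mulVec f‖ := norm_nonneg _
  -- bound ‖(1-Q')⁻¹‖ ≤ 2‖(1-Q)⁻¹‖
  have hBn : ‖(1 - Q')⁻¹‖ ≤ 2 * ‖(1 - Q)⁻¹‖ := by
    have h1 : ‖(1 - Q')⁻¹ - (1 - Q)⁻¹‖ ≤ ‖(1 - Q')⁻¹‖ * (α * n) * ‖(1 - Q)⁻¹‖ := by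
      rw [hid]
      calc ‖(1 - Q')⁻¹ * (Q' - Q) * (1 - Q)⁻¹‖
          ≤ ‖(1 - Q')⁻¹ * (Q' - Q)‖ * ‖(1 - Q)⁻¹‖ := norm_mul_le _ _
        _ ≤ ‖(1 - Q')⁻¹‖ * ‖Q' - Q‖ * ‖(1 - Q)⁻¹‖ := by
            gcongr; exact norm_mul_le _ _
        _ ≤ ‖(1 - Q')⁻¹‖ * (α * n) * ‖(1 - Q)⁻¹‖ := by gcongr
    have h2 : ‖(1 - Q')⁻¹‖ - ‖(1 - Q)⁻¹‖ ≤ ‖(1 - Q')⁻¹ - (1 - Q)⁻¹‖ :=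
      (abs_norm_sub_norm_le _ _).trans' (le_abs_self _)
    nlinarith [mul_le_mul_of_nonneg_left hsmall hBn0]
  intro s
  -- step 1: replace f' by f + α
  have step1 : (1 - Q')⁻¹.mulVec f' s ≤ (1 - Q')⁻¹.mulVec f s + α * ‖(1 - Q')⁻¹‖ := by
    have h1 : (1 - Q')⁻¹.mulVec f' s ≤ (1 - Q')⁻¹.mulVec f s + α * ∑ t, (1 - Q')⁻¹ s t := by
      simp only [Matrix.mulVec, dotProduct, Finset.mul_sum]
      rw [← Finset.sum_add_distrib]
      apply Finset.sum_le_sum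
      intro t _
      have := mul_le_mul_of_nonneg_left (hfdiff t) (hpos s t)
      nlinarith
    have h2 : ∑ t, (1 - Q')⁻¹ s t ≤ ‖(1 - Q')⁻¹‖ := by
      refine le_trans ?_ (row_sum_le_norm' _ s)
      apply Finset.sum_le_sum
      intro t _
      exact le_abs_self _
    nlinarith
  -- step 2: replace (1-Q')⁻¹ by (1-Q)⁻¹
  have step2 : (1 - Q')⁻¹.mulVec f s ≤ (1 - Q)⁻¹.mulVec f s +
      ‖(1 - Q')⁻¹‖ * ((α * n) * ‖(1 - Q)⁻¹.mulVec f‖) := by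
    have hsub : (1 - Q')⁻¹.mulVec f s - (1 - Q)⁻¹.mulVec f s =
        ((1 - Q')⁻¹.mulVec ((Q' - Q).mulVec ((1 - Q)⁻¹.mulVec f))) s := by
      rw [Matrix.mulVec_mulVec, Matrix.mulVec_mulVec, ← hid, Matrix.sub_mulVec]
      simp
    have hb : ‖(1 - Q')⁻¹.mulVec ((Q' - Q).mulVec ((1 - Q)⁻¹.mulVec f))‖ ≤
        ‖(1 - Q')⁻¹‖ * ((α * n) * ‖(1 - Q)⁻¹.mulVec f‖) := by
      calc ‖(1 - Q')⁻¹.mulVec ((Q' - Q).mulVec ((1 - Q)⁻¹.mulVec f))‖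
          ≤ ‖(1 - Q')⁻¹‖ * ‖(Q' - Q).mulVec ((1 - Q)⁻¹.mulVec f)‖ :=
            Matrix.linfty_opNorm_mulVec _ _
        _ ≤ ‖(1 - Q')⁻¹‖ * (‖Q' - Q‖ * ‖(1 - Q)⁻¹.mulVec f‖) := by
            gcongr; exact Matrix.linfty_opNorm_mulVec _ _
        _ ≤ ‖(1 - Q')⁻¹‖ * ((α * n) * ‖(1 - Q)⁻¹.mulVec f‖) := by gcongr
    have hcomp : (1 - Q')⁻¹.mulVec f s - (1 - Q)⁻¹.mulVec f s ≤
        ‖(1 - Q')⁻¹.mulVec ((Q' - Q).mulVec ((1 - Q)⁻¹.mulVec f))‖ := by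
      rw [hsub]
      exact (le_abs_self _).trans ((Real.norm_eq_abs _ ▸ norm_le_pi_norm _ s))
    linarith
  have final : α * ‖(1 - Q')⁻¹‖ + ‖(1 - Q')⁻¹‖ * ((α * n) * ‖(1 - Q)⁻¹.mulVec f‖) ≤
      2 * α * ‖(1 - Q)⁻¹‖ * (1 + ‖(1 - Q)⁻¹.mulVec f‖ * n) := by
    nlinarith [mul_le_mul_of_nonneg_left hBn hα0,
      mul_le_mul_of_nonneg_left hBn (mul_nonneg (mul_nonneg hα0 (by linarith : (0:ℝ) ≤ n)) hC0)]
  linarith
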